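/- Let V and W be real inner product spaces and B : V × V → W a symmetric bilinear map. If ⟨B(x,x), B(x,y)⟩ = 0 for every orthogonal pair x, y ∈ V, then the function x ↦ ‖B(x,x)‖ / ‖x‖² is constant on nonzero vectors; i.e., there exists λ ≥ 0 such that ‖B(x,x)‖ = λ‖x‖² for all x ∈ V (assuming V has dimension ≥ 2 and is connected in the sense of the unit sphere, e.g. dim V ≥ 2). -/

import Mathlib

open RealInnerProductSpace

private theorem aux_pair {V : Type*} [NormedAddCommGroup V] [InnerProductSpace ℝ V]
    {W : Type*} [NormedAddCommGroup W] [InnerProductSpace ℝ W]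
    (B : V →ₗ[ℝ] V →ₗ[ℝ] W) (hsymm : ∀ x y : V, B x y = B y x)
    (horth : ∀ x y : V, ⟪x, y⟫ = 0 → ⟪B x x, B x y⟫ = 0)
    {x y : V} (hx : ‖x‖ = 1) (hy : ‖y‖ = 1) (hxy : ⟪x, y⟫ = 0) :
    ⟪B x x, B y y⟫ = ‖B x x‖ ^ 2 - 2 * ‖B x y‖ ^ 2 ∧ ‖B y y‖ ^ 2 = ‖B x x‖ ^ 2 := by
  have hx2 : ⟪x, x⟫ = 1 := by
    rw [real_inner_self_eq_norm_sq, hx]; norm_num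
  have hy2 : ⟪y, y⟫ = 1 := by
    rw [real_inner_self_eq_norm_sq, hy]; norm_num
  have hyx : ⟪y, x⟫ = 0 := by rw [real_inner_comm]; exact hxy
  have hba : B y x = B x y := hsymm y x
  have h0 : ⟪B x x, B x y⟫ = 0 := horth x y hxy
  have h0' : ⟪B y y, B x y⟫ = 0 := by
    have := horth y x hyx
    rwa [hba] at this
  have key : ∀ t : ℝ, ⟪B (x + t•y) (x + t•y), B (x + t•y) (y - t•x)⟫ = 0 := by
    intro t
    apply horth
    simp [inner_add_left, inner_sub_right, real_inner_smul_left, real_inner_smul_right,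
      hx2, hy2, hxy, hyx, hx, hy]
  have k1 := key 1
  have k2 := key 2
  simp only [map_add, map_smul, map_sub, LinearMap.add_apply, LinearMap.smul_apply,
    LinearMap.sub_apply, hba, inner_add_left, inner_add_right, inner_sub_left, inner_sub_right,
    real_inner_smul_left, real_inner_smul_right, inner_smul_left, inner_smul_right,
    conj_trivial] at k1 k2
  have c1 : ⟪B x y, B x x⟫ = ⟪B x x, B x y⟫ := real_inner_comm _ _
  have c2 : ⟪B y y, B x x⟫ = ⟪B x x, B y y⟫ := real_inner_comm _ _
  have c3 : ⟪B y y, B x y⟫ = ⟪B x y, B y y⟫ := real_inner_comm _ _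
  have n1 : ⟪B x x, B x x⟫ = ‖B x x‖ ^ 2 := real_inner_self_eq_norm_sq _
  have n2 : ⟪B x y, B x y⟫ = ‖B x y‖ ^ 2 := real_inner_self_eq_norm_sq _
  have n3 : ⟪B y y, B y y⟫ = ‖B y y‖ ^ 2 := real_inner_self_eq_norm_sq _
  rw [c1, c2, c3, n1, n2, n3] at k1 k2
  rw [c3] at h0'
  constructor <;> linarith [k1, k2, h0, h0']

private theorem aux_plane {V : Type*} [NormedAddCommGroup V] [InnerProductSpace ℝ V]
    {W : Type*} [NormedAddCommGroup W] [InnerProductSpace ℝ W]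
    (B : V →ₗ[ℝ] V →ₗ[ℝ] W) (hsymm : ∀ x y : V, B x y = B y x)
    (horth : ∀ x y : V, ⟪x, y⟫ = 0 → ⟪B x x, B x y⟫ = 0)
    {u w : V} (hu : ‖u‖ = 1) (hw : ‖w‖ = 1) (huw : ⟪u, w⟫ = 0)
    {c s : ℝ} (hcs : c ^ 2 + s ^ 2 = 1) :
    ‖B (c • u + s • w) (c • u + s • w)‖ = ‖B u u‖ := by
  obtain ⟨h1, h2⟩ := aux_pair B hsymm horth hu hw huw
  have h0 : ⟪B u u, B u w⟫ = 0 := horth u w huw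
  have h0' : ⟪B w w, B u w⟫ = 0 := by
    have := horth w u (by rw [real_inner_comm]; exact huw)
    rwa [hsymm w u] at this
  have hba : B w u = B u w := hsymm w u
  have hsq : ‖B (c • u + s • w) (c • u + s • w)‖ ^ 2 = ‖B u u‖ ^ 2 := by
    rw [← real_inner_self_eq_norm_sq]
    simp only [map_add, map_smul, LinearMap.add_apply, LinearMap.smul_apply, hba,
      inner_add_left, inner_add_right, real_inner_smul_left, real_inner_smul_right,
      inner_smul_left, inner_smul_right, conj_trivial]
    have c1 : ⟪B u w, B u u⟫ = ⟪B u u, B u w⟫ := real_inner_comm _ _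
    have c2 : ⟪B w w, B u u⟫ = ⟪B u u, B w w⟫ := real_inner_comm _ _
    have c3 : ⟪B w w, B u w⟫ = ⟪B u w, B w w⟫ := real_inner_comm _ _
    have n1 : ⟪B u u, B u u⟫ = ‖B u u‖ ^ 2 := real_inner_self_eq_norm_sq _
    have n2 : ⟪B u w, B u w⟫ = ‖B u w‖ ^ 2 := real_inner_self_eq_norm_sq _
    have n3 : ⟪B w w, B w w⟫ = ‖B w w‖ ^ 2 := real_inner_self_eq_norm_sq _
    have h0'' : ⟪B u w, B w w⟫ = 0 := by rw [real_inner_comm]; exact h0'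
    rw [c1, c2, c3, n1, n2, n3, h0, h0'', h1, h2]
    linear_combination (‖(B u) u‖ ^ 2 * (c ^ 2 + s ^ 2 + 1)) * hcs
  have := congrArg Real.sqrt hsq
  rwa [Real.sqrt_sq (norm_nonneg _), Real.sqrt_sq (norm_nonneg _)] at this

/-- Lemma 3.1, converse direction (isotropy criterion): if `⟨B(x,x), B(x,y)⟩ = 0` for
every orthogonal pair `x, y` in a space of dimension ≥ 2, then `x ↦ ‖B(x,x)‖/‖x‖²` is
constant, i.e. there is `λ ≥ 0` with `‖B(x,x)‖ = λ‖x‖²` for all `x`. -/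
theorem orthogonality_implies_isotropic
    {V : Type*} [NormedAddCommGroup V] [InnerProductSpace ℝ V] [FiniteDimensional ℝ V]
    {W : Type*} [NormedAddCommGroup W] [InnerProductSpace ℝ W]
    (hdim : 2 ≤ Module.finrank ℝ V)
    (B : V →ₗ[ℝ] V →ₗ[ℝ] W) (hsymm : ∀ x y : V, B x y = B y x)
    (horth : ∀ x y : V, ⟪x, y⟫ = 0 → ⟪B x x, B x y⟫ = 0) :
    ∃ lam : ℝ, 0 ≤ lam ∧ ∀ x : V, ‖B x x‖ = lam * ‖x‖ ^ 2 := by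
  have hnt : Nontrivial V := by
    apply Module.nontrivial_of_finrank_pos (R := ℝ); omega
  obtain ⟨x0, hx0⟩ := exists_ne (0 : V)
  obtain ⟨e, he⟩ : ∃ e : V, ‖e‖ = 1 := ⟨‖x0‖⁻¹ • x0, norm_smul_inv_norm hx0⟩
  -- key: every unit vector has the same ‖B u u‖
  have hunit : ∀ u : V, ‖u‖ = 1 → ‖B u u‖ = ‖B e e‖ := by
    intro u hu
    have hu2 : ⟪u, u⟫ = 1 := by rw [real_inner_self_eq_norm_sq, hu]; norm_num
    set p : V := e - ⟪e, u⟫ • u with hp_def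
    have hup : ⟪u, p⟫ = 0 := by
      rw [hp_def, inner_sub_right, real_inner_smul_right, hu2, real_inner_comm]; ring
    by_cases hp : p = 0
    · -- e = ⟪e,u⟫ • u
      have he_eq : e = ⟪e, u⟫ • u := by
        have h' : e - ⟪e, u⟫ • u = 0 := hp
        exact sub_eq_zero.mp h'
      have hc : |⟪e, u⟫| = 1 := by
        have h'' := congrArg norm he_eq
        rw [norm_smul, hu, mul_one, Real.norm_eq_abs, he] at h''
        exact h''.symm
      rw [he_eq]
      simp only [map_smul, LinearMap.smul_apply, norm_smul, Real.norm_eq_abs, hc]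
      ring
    · set s : ℝ := ‖p‖ with hs_def
      have hs0 : s ≠ 0 := norm_ne_zero_iff.mpr hp
      set w : V := s⁻¹ • p with hw_def
      have hw : ‖w‖ = 1 := norm_smul_inv_norm hp
      have huw : ⟪u, w⟫ = 0 := by
        rw [hw_def, real_inner_smul_right, hup]; ring
      have he_eq : e = ⟪e, u⟫ • u + s • w := by
        rw [hw_def, smul_smul, mul_inv_cancel₀ hs0, one_smul, hp_def]; abel
      have hcs : ⟪e, u⟫ ^ 2 + s ^ 2 = 1 := by
        have h1 : ⟪e, e⟫ = 1 := by rw [real_inner_self_eq_norm_sq, he]; norm_num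
        have hw2 : ⟪w, w⟫ = 1 := by rw [real_inner_self_eq_norm_sq, hw]; norm_num
        have hwu : ⟪w, u⟫ = 0 := by rw [real_inner_comm]; exact huw
        rw [he_eq] at h1
        simp only [inner_add_left, inner_add_right, real_inner_smul_left,
          real_inner_smul_right, hu2, hw2, huw, hwu] at h1
        nlinarith [h1]
      have := aux_plane B hsymm horth hu hw huw hcs
      rw [← he_eq] at this
      exact this.symm
  refine ⟨‖B e e‖, norm_nonneg _, fun x => ?_⟩
  by_cases hx : x = 0
  · simp [hx]
  · set u : V := ‖x‖⁻¹ • x with hu_def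
    have hu : ‖u‖ = 1 := norm_smul_inv_norm hx
    have hx_eq : x = ‖x‖ • u := by
      rw [hu_def, smul_smul, mul_inv_cancel₀ (norm_ne_zero_iff.mpr hx), one_smul]
    calc ‖B x x‖ = ‖B (‖x‖ • u) (‖x‖ • u)‖ := by rw [← hx_eq]
      _ = ‖x‖ * (‖x‖ * ‖B u u‖) := by
          simp only [map_smul, LinearMap.smul_apply, norm_smul, Real.norm_eq_abs,
            abs_of_nonneg (norm_nonneg x)]
      _ = ‖B e e‖ * ‖x‖ ^ 2 := by rw [hunit u hu]; ring
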